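/- The softmax operator with temperature τ > 0 is (1/τ)-Lipschitz with respect to the ℓ₁ norm: for all x, y ∈ ℝ^n, ‖σ_τ(x) - σ_τ(y)‖₁ ≤ (1/τ)‖x - y‖₁. -/

import Mathlib

noncomputable def softmax {n : ℕ} (τ : ℝ) (x : Fin n → ℝ) : Fin n → ℝ :=
  fun a => Real.exp (x a / τ) / ∑ b, Real.exp (x b / τ)

lemma softmax_key (s t : ℝ) (hs : 0 ≤ s) (ht0 : 0 < t) (ht1 : t ≤ 1) :
    2 * (Real.exp s * t / (1 + (Real.exp s - 1) * t) - t) ≤ s := by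
  set r := Real.exp (s / 2) with hr_def
  have hr : 1 ≤ r := Real.one_le_exp (by linarith)
  have hr0 : (0:ℝ) < r := lt_of_lt_of_le one_pos hr
  have hes : Real.exp s = r ^ 2 := by
    rw [hr_def, sq, ← Real.exp_add]; ring_nf
  have hD : (0:ℝ) < 1 + (r ^ 2 - 1) * t := by nlinarith [mul_nonneg (show (0:ℝ) ≤ r^2-1 by nlinarith) ht0.le]
  have hlog : 1 - 1 / r ≤ Real.log r := by
    have h := Real.log_le_sub_one_of_pos (show (0:ℝ) < 1 / r by positivity)
    rw [one_div, Real.log_inv] at h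
    rw [show (1:ℝ)/r = r⁻¹ from one_div r]
    linarith
  have hs2 : s = 2 * Real.log r := by rw [hr_def, Real.log_exp]; ring
  rw [hes, hs2]
  have h1 : r ^ 2 * t / (1 + (r ^ 2 - 1) * t) - t
      = t * (1 - t) * (r ^ 2 - 1) / (1 + (r ^ 2 - 1) * t) := by
    rw [eq_div_iff hD.ne', sub_mul, div_mul_cancel₀ _ hD.ne']
    ring
  rw [h1]
  have h2 : t * (1 - t) * (r ^ 2 - 1) / (1 + (r ^ 2 - 1) * t) ≤ (r - 1) / r := by
    rw [div_le_div_iff₀ hD hr0]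
    nlinarith [sq_nonneg (2 * t * r - 1), sq_nonneg (2 * t - 1),
      mul_nonneg (sub_nonneg.2 hr) ht0.le,
      mul_nonneg (sub_nonneg.2 hr) (sub_nonneg.2 ht1)]
  have h3 : (r - 1) / r = 1 - 1 / r := by field_simp
  linarith

lemma softmax_single_le {n : ℕ} (τ : ℝ) (hτ : 0 < τ) (x y : Fin n → ℝ) (i : Fin n)
    (hxy : ∀ a, a ≠ i → x a = y a) (hle : x i ≤ y i) :
    ∑ a, |softmax τ x a - softmax τ y a| ≤ (1 / τ) * (y i - x i) := by
  set u : Fin n → ℝ := fun a => Real.exp (x a / τ) with hu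
  set S : ℝ := ∑ b, u b with hS_def
  have hu_pos : ∀ a, 0 < u a := fun a => Real.exp_pos _
  have hS : 0 < S := Finset.sum_pos (fun a _ => hu_pos a) ⟨i, Finset.mem_univ i⟩
  set L : ℝ := Real.exp ((y i - x i) / τ) with hL_def
  have hL1 : 1 ≤ L := Real.one_le_exp (div_nonneg (by linarith) hτ.le)
  have hvy : ∀ a, Real.exp (y a / τ) = if a = i then L * u a else u a := by
    intro a
    by_cases ha : a = i
    · subst ha
      rw [if_pos rfl]
      show Real.exp (y a / τ) = Real.exp ((y a - x a) / τ) * Real.exp (x a / τ)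
      rw [← Real.exp_add]
      ring_nf
    · rw [if_neg ha]
      show Real.exp (y a / τ) = Real.exp (x a / τ)
      rw [hxy a ha]
  set T : ℝ := ∑ b, Real.exp (y b / τ) with hT_def
  have hT_eq : T = S + (L - 1) * u i := by
    rw [hT_def, hS_def, Finset.sum_congr rfl (fun a _ => hvy a)]
    have h2 : ∀ a : Fin n, (if a = i then L * u a else u a)
        = u a + (if a = i then (L - 1) * u i else 0) := by
      intro a; by_cases h : a = i
      · subst h; simp; ring
      · simp [h]
    rw [Finset.sum_congr rfl (fun a _ => h2 a), Finset.sum_add_distrib,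
      Finset.sum_ite_eq' Finset.univ i (fun _ => (L - 1) * u i)]
    simp
  have hui_le : u i ≤ S :=
    Finset.single_le_sum (fun a _ => (hu_pos a).le) (Finset.mem_univ i)
  have hT : 0 < T := by nlinarith [hu_pos i]
  have hp : ∀ a, softmax τ x a = u a / S := fun a => rfl
  have hq : ∀ a, softmax τ y a = (if a = i then L * u a else u a) / T := by
    intro a
    show Real.exp (y a / τ) / T = _
    rw [hvy a]
  -- signs
  have hST : S ≤ T := by nlinarith [hu_pos i]
  have hsign_i : softmax τ x i ≤ softmax τ y i := by
    rw [hp, hq, if_pos rfl]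
    rw [div_le_div_iff₀ hS hT]
    have : u i * T = u i * S + (L - 1) * u i * u i := by rw [hT_eq]; ring
    nlinarith [hu_pos i]
  have hsign : ∀ a, a ≠ i → softmax τ y a ≤ softmax τ x a := by
    intro a ha
    rw [hp, hq, if_neg ha]
    exact div_le_div_of_nonneg_left (hu_pos a).le hS hST  -- check name/arg order
  -- sums to one
  have hsum_x : ∑ a, softmax τ x a = 1 := by
    rw [Finset.sum_congr rfl (fun a _ => hp a), ← Finset.sum_div, ← hS_def,
      div_self hS.ne']
  have hsum_y : ∑ a, softmax τ y a = 1 := by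
    show ∑ a, Real.exp (y a / τ) / T = 1
    rw [← Finset.sum_div, ← hT_def, div_self hT.ne']
  -- total sum = 2 * (q i - p i)
  have hsplit : ∑ a, |softmax τ x a - softmax τ y a|
      = 2 * (softmax τ y i - softmax τ x i) := by
    rw [← Finset.sum_compl_add_sum {i} (fun a => |softmax τ x a - softmax τ y a|)]
    have h1 : ∑ a ∈ ({i}ᶜ : Finset (Fin n)), |softmax τ x a - softmax τ y a|
        = ∑ a ∈ ({i}ᶜ : Finset (Fin n)), (softmax τ x a - softmax τ y a) := by
      refine Finset.sum_congr rfl (fun a ha => ?_)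
      have ha' : a ≠ i := by simpa using ha
      exact abs_of_nonneg (by linarith [hsign a ha'])
    have h2 : ∑ a ∈ ({i}ᶜ : Finset (Fin n)), (softmax τ x a - softmax τ y a)
        = (softmax τ y i - softmax τ x i) := by
      have hx1 := Finset.sum_compl_add_sum {i} (fun a => softmax τ x a)
      have hy1 := Finset.sum_compl_add_sum {i} (fun a => softmax τ y a)
      rw [Finset.sum_singleton, hsum_x] at hx1
      rw [Finset.sum_singleton, hsum_y] at hy1
      rw [Finset.sum_sub_distrib]
      linarith
    rw [h1, h2, Finset.sum_singleton, abs_of_nonpos (by linarith [hsign_i])]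
    ring
  rw [hsplit]
  -- now the analytic bound
  set t : ℝ := u i / S with ht_def
  have ht0 : 0 < t := div_pos (hu_pos i) hS
  have ht1 : t ≤ 1 := (div_le_one hS).2 hui_le
  have hpi : softmax τ x i = t := hp i
  have hqi : softmax τ y i = L * t / (1 + (L - 1) * t) := by
    rw [hq, if_pos rfl, ht_def, hT_eq]
    have h1 : S + (L - 1) * u i ≠ 0 := by nlinarith [hu_pos i]
    have h2 : 1 + (L - 1) * (u i / S) ≠ 0 := by
      have : 0 < 1 + (L - 1) * (u i / S) := by
        have := div_pos (hu_pos i) hS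
        nlinarith
      linarith
    field_simp
  have hkey := softmax_key ((y i - x i) / τ) t (div_nonneg (by linarith) hτ.le) ht0 ht1
  rw [hpi, hqi]
  have : (1 / τ) * (y i - x i) = (y i - x i) / τ := by ring
  rw [this]
  exact hkey

lemma softmax_single {n : ℕ} (τ : ℝ) (hτ : 0 < τ) (x y : Fin n → ℝ) (i : Fin n)
    (hxy : ∀ a, a ≠ i → x a = y a) :
    ∑ a, |softmax τ x a - softmax τ y a| ≤ (1 / τ) * |x i - y i| := by
  rcases le_total (x i) (y i) with h | h
  · rw [abs_sub_comm (x i) (y i), abs_of_nonneg (by linarith)]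
    exact softmax_single_le τ hτ x y i hxy h
  · rw [abs_of_nonneg (by linarith : (0:ℝ) ≤ x i - y i)]
    have := softmax_single_le τ hτ y x i (fun a ha => (hxy a ha).symm) h
    calc ∑ a, |softmax τ x a - softmax τ y a|
        = ∑ a, |softmax τ y a - softmax τ x a| := by
          refine Finset.sum_congr rfl fun a _ => abs_sub_comm _ _
      _ ≤ (1 / τ) * (x i - y i) := this

lemma softmax_aux {n : ℕ} (τ : ℝ) (hτ : 0 < τ) (s : Finset (Fin n)) :
    ∀ x y : Fin n → ℝ, (∀ a, a ∉ s → x a = y a) →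
      ∑ a, |softmax τ x a - softmax τ y a| ≤ (1 / τ) * ∑ a ∈ s, |x a - y a| := by
  induction s using Finset.induction_on with
  | empty =>
      intro x y h
      have hxy : x = y := funext fun a => h a (Finset.notMem_empty a)
      simp [hxy]
  | @insert i s hi ih =>
      intro x y h
      set x' : Fin n → ℝ := Function.update x i (y i) with hx'
      have hx'i : x' i = y i := Function.update_self i (y i) x
      have h1 : ∑ a, |softmax τ x a - softmax τ x' a| ≤ (1 / τ) * |x i - x' i| := by
        refine softmax_single τ hτ x x' i (fun a ha => ?_)
        rw [hx', Function.update_of_ne ha]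
      rw [hx'i] at h1
      have h2 : ∑ a, |softmax τ x' a - softmax τ y a| ≤ (1 / τ) * ∑ a ∈ s, |x' a - y a| := by
        refine ih x' y (fun a ha => ?_)
        by_cases hai : a = i
        · subst hai; exact hx'i
        · rw [hx', Function.update_of_ne hai]
          exact h a (by simp [hai, ha])
      have h3 : ∑ a ∈ s, |x' a - y a| = ∑ a ∈ s, |x a - y a| := by
        refine Finset.sum_congr rfl fun a ha => ?_
        rw [hx', Function.update_of_ne (fun hh => hi (by rwa [← hh]))]
      have htri : ∑ a, |softmax τ x a - softmax τ y a|
          ≤ ∑ a, |softmax τ x a - softmax τ x' a| + ∑ a, |softmax τ x' a - softmax τ y a| := by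
        rw [← Finset.sum_add_distrib]
        exact Finset.sum_le_sum fun a _ => abs_sub_le _ _ _
      rw [Finset.sum_insert hi, mul_add]
      rw [h3] at h2
      linarith

/-- The softmax operator with temperature `τ > 0` is `(1/τ)`-Lipschitz with respect
to the `ℓ₁` norm. -/
theorem softmax_l1_lipschitz {n : ℕ} (τ : ℝ) (hτ : 0 < τ) (x y : Fin n → ℝ) :
    ∑ a, |softmax τ x a - softmax τ y a| ≤ (1 / τ) * ∑ a, |x a - y a| :=
  softmax_aux τ hτ Finset.univ x y (fun a ha => absurd (Finset.mem_univ a) ha)
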